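/- Let b : ℝⁿ → ℝ be a one-hidden-layer ReLU network, let D := {x : b(x) ≥ 0}, and write ∂D for the topological frontier of D; assume ∂D is connected. Let 𝒮 be a collection of activation sets S ⊆ {1,…,M} such that (a) there exists S₀ ∈ 𝒮 with X̄(S₀) ∩ ∂D ≠ ∅, and (b) 𝒮 is closed under boundary adjacency: whenever S ∈ 𝒮 and S' ⊆ {1,…,M} satisfies X̄(S) ∩ X̄(S') ∩ ∂D ≠ ∅, then S' ∈ 𝒮. Then ∂D ⊆ ⋃_{S ∈ 𝒮} X̄(S). -/
import Mathlib


open scoped RealInnerProductSpace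

/-- A one-hidden-layer ReLU network with input weights `W`, biases `r`,
output weights `Ω` and output bias `ψ`. -/
noncomputable def reluNet {n M : ℕ} (W : Fin M → EuclideanSpace ℝ (Fin n))
    (r Ω : Fin M → ℝ) (ψ : ℝ) (x : EuclideanSpace ℝ (Fin n)) : ℝ :=
  ψ + ∑ j, Ω j * max 0 (⟪W j, x⟫ + r j)

/-- The activation region `X̄(S)` of a one-hidden-layer ReLU network. -/
def actRegion {n M : ℕ} (W : Fin M → EuclideanSpace ℝ (Fin n)) (r : Fin M → ℝ)
    (S : Set (Fin M)) : Set (EuclideanSpace ℝ (Fin n)) :=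
  {x | (∀ j ∈ S, 0 ≤ ⟪W j, x⟫ + r j) ∧ (∀ j ∉ S, ⟪W j, x⟫ + r j ≤ 0)}

lemma actRegion_isClosed {n M : ℕ} (W : Fin M → EuclideanSpace ℝ (Fin n)) (r : Fin M → ℝ)
    (S : Set (Fin M)) : IsClosed (actRegion W r S) := by
  have h1 : actRegion W r S =
      (⋂ j ∈ S, {x : EuclideanSpace ℝ (Fin n) | 0 ≤ ⟪W j, x⟫ + r j}) ∩
      (⋂ j ∈ Sᶜ, {x : EuclideanSpace ℝ (Fin n) | ⟪W j, x⟫ + r j ≤ 0}) := by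
    ext x
    simp [actRegion, Set.mem_iInter]
  rw [h1]
  have hc : ∀ j : Fin M, Continuous fun x : EuclideanSpace ℝ (Fin n) => ⟪W j, x⟫ + r j :=
    fun j => (continuous_const.inner continuous_id).add continuous_const
  exact IsClosed.inter
    (isClosed_biInter fun j _ => isClosed_le continuous_const (hc j))
    (isClosed_biInter fun j _ => isClosed_le (hc j) continuous_const)

lemma mem_actRegion_self {n M : ℕ} (W : Fin M → EuclideanSpace ℝ (Fin n)) (r : Fin M → ℝ)
    (x : EuclideanSpace ℝ (Fin n)) : x ∈ actRegion W r {j | 0 ≤ ⟪W j, x⟫ + r j} := by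
  constructor
  · intro j hj; exact hj
  · intro j hj; exact le_of_not_ge hj

/-- First claim of Proposition 2: a collection `𝒮` of activation sets that contains
some set whose region meets the (connected) boundary `∂D` of `D = {x : b(x) ≥ 0}`,
and that is closed under adjacency along `∂D`, covers all of `∂D`. -/
theorem boundary_subset_enumerated_regions {n M : ℕ}
    (W : Fin M → EuclideanSpace ℝ (Fin n)) (r Ω : Fin M → ℝ) (ψ : ℝ)
    (𝒮 : Set (Set (Fin M)))
    (hconn : IsConnected (frontier {x | 0 ≤ reluNet W r Ω ψ x}))
    (hinit : ∃ S₀ ∈ 𝒮,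
      (actRegion W r S₀ ∩ frontier {x | 0 ≤ reluNet W r Ω ψ x}).Nonempty)
    (hadj : ∀ S ∈ 𝒮, ∀ S' : Set (Fin M),
      (actRegion W r S ∩ actRegion W r S' ∩
        frontier {x | 0 ≤ reluNet W r Ω ψ x}).Nonempty → S' ∈ 𝒮) :
    frontier {x | 0 ≤ reluNet W r Ω ψ x} ⊆ ⋃ S ∈ 𝒮, actRegion W r S := by
  set F := frontier {x | 0 ≤ reluNet W r Ω ψ x} with hF
  set A : Set (EuclideanSpace ℝ (Fin n)) := ⋃ S ∈ 𝒮, actRegion W r S with hA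
  set B : Set (EuclideanSpace ℝ (Fin n)) := ⋃ S ∈ 𝒮ᶜ, actRegion W r S with hB
  have hAc : IsClosed A := Set.Finite.isClosed_biUnion (Set.toFinite _)
    fun S _ => actRegion_isClosed W r S
  have hBc : IsClosed B := Set.Finite.isClosed_biUnion (Set.toFinite _)
    fun S _ => actRegion_isClosed W r S
  have hdisj : ∀ x ∈ F, x ∈ A → x ∉ B := by
    intro x hxF hxA hxB
    obtain ⟨S, hS, hxS⟩ := Set.mem_iUnion₂.1 hxA
    obtain ⟨S', hS', hxS'⟩ := Set.mem_iUnion₂.1 hxB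
    exact hS' (hadj S hS S' ⟨x, ⟨hxS, hxS'⟩, hxF⟩)
  have hcov : F ⊆ A ∪ B := by
    intro x _
    by_cases h : {j | 0 ≤ ⟪W j, x⟫ + r j} ∈ 𝒮
    · exact Or.inl (Set.mem_biUnion h (mem_actRegion_self W r x))
    · exact Or.inr (Set.mem_biUnion h (mem_actRegion_self W r x))
  intro x hxF
  by_contra hxA
  have hxB : x ∈ B := (hcov hxF).resolve_left hxA
  obtain ⟨S₀, hS₀, y, hyA, hyF⟩ := hinit
  have hyA' : y ∈ A := Set.mem_biUnion hS₀ hyA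
  have hpre := hconn.isPreconnected
  have h1 : F ⊆ Bᶜ ∪ Aᶜ := by
    intro z hz
    by_cases hzA : z ∈ A
    · exact Or.inl (hdisj z hz hzA)
    · exact Or.inr hzA
  have h2 : (F ∩ Bᶜ).Nonempty := ⟨y, hyF, hdisj y hyF hyA'⟩
  have h3 : (F ∩ Aᶜ).Nonempty := ⟨x, hxF, hxA⟩
  obtain ⟨z, hzF, hzB, hzA⟩ := hpre Bᶜ Aᶜ hBc.isOpen_compl hAc.isOpen_compl h1 h2 h3
  exact (hcov hzF).elim hzA hzB
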